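/- Let A : V → ℂ be a complex-linear map, let B : V → ℂ be a complex-antilinear map (additive, with B(c·x) = c̄·B(x) for all c ∈ ℂ), and suppose that the real-linear map A + B : V → ℂ is surjective and that the operator norms satisfy ‖B‖ < ‖A‖. Then the restriction of the Kähler form ω to the kernel W := ker(A + B) is a nondegenerate bilinear form; in other words, W is a symplectic subspace of (V, ω). -/

import Mathlib

/- `V` is a finite-dimensional complex inner product space. With the paper's convention
(inner product `⟪·,·⟫` complex-linear in the first argument) the Kähler form is
`ω(x,y) = −Im ⟪x,y⟫`; in terms of Mathlib's inner product (conjugate-linear in the first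
argument) this is `ω x y = (inner x y : ℂ).im`, which satisfies `ω x (I • x) = ‖x‖²`.

Statement: if `A` is complex-linear, `B` is complex-antilinear, `A + B : V → ℂ` is
surjective (as a real-linear map) and `‖B‖ < ‖A‖` (operator norms), then the restriction
of `ω` to `W = ker (A + B)` is nondegenerate, i.e. `W` is a symplectic subspace. -/
theorem stmt10 {V : Type*} [NormedAddCommGroup V] [InnerProductSpace ℂ V]
    [FiniteDimensional ℂ V]
    (A B : V →L[ℝ] ℂ)
    (hA : ∀ (c : ℂ) (x : V), A (c • x) = c * A x)
    (hB : ∀ (c : ℂ) (x : V), B (c • x) = (starRingEnd ℂ) c * B x)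
    (hsurj : Function.Surjective fun x : V => A x + B x)
    (hnorm : ‖B‖ < ‖A‖) :
    ∀ x : V, A x + B x = 0 → x ≠ 0 →
      ∃ y : V, (A y + B y = 0) ∧ (inner ℂ x y : ℂ).im ≠ 0 := by
  intro x hx hx0
  by_contra hcon
  push_neg at hcon
  -- hcon : ∀ y, A y + B y = 0 → (inner x y).im = 0
  -- Step B: factor the functional  y ↦ (inner x y).im  through A + B
  set T : V →ₗ[ℝ] ℂ := (A + B).toLinearMap with hT
  have hTsurj : Function.Surjective T := by
    intro z; obtain ⟨y, hy⟩ := hsurj z; exact ⟨y, hy⟩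
  obtain ⟨g, hg⟩ := T.exists_rightInverse_of_surjective (LinearMap.range_eq_top.2 hTsurj)
  set p : ℝ := (inner ℂ x (g 1) : ℂ).im with hp
  set q : ℝ := (inner ℂ x (g Complex.I) : ℂ).im with hq
  set c : ℂ := ⟨p, -q⟩ with hc
  have hker : ∀ y : V, T y = 0 → (inner ℂ x y : ℂ).im = 0 := by
    intro y hy
    apply hcon
    have : T y = A y + B y := rfl
    rw [this] at hy; exact hy
  have h0 : ∀ y : V, (inner ℂ x y : ℂ).im = (c * (A y + B y)).re := by
    intro y
    set z : ℂ := A y + B y with hz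
    have hTy : T y = z := rfl
    have h1 : T (y - g z) = 0 := by
      have : T (g z) = z := by
        have := congrArg (fun f => f z) hg
        simpa using this
      simp [map_sub, hTy, this]
    have h2 : (inner ℂ x (y - g z) : ℂ).im = 0 := hker _ h1
    have h3 : (inner ℂ x y : ℂ).im = (inner ℂ x (g z) : ℂ).im := by
      have : (inner ℂ x y : ℂ) = inner ℂ x (y - g z) + inner ℂ x (g z) := by
        rw [← inner_add_right]; congr 1; abel
      rw [this, Complex.add_im, h2, zero_add]
    have h4 : g z = z.re • g 1 + z.im • g Complex.I := by
      rw [← map_smul, ← map_smul, ← map_add]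
      congr 1
      simp [Complex.real_smul]
    rw [h3, h4]
    rw [inner_add_right]
    have e1 : (inner ℂ x (z.re • g 1) : ℂ) = (z.re : ℂ) * inner ℂ x (g 1) := by
      rw [← Complex.coe_smul, inner_smul_right]
    have e2 : (inner ℂ x (z.im • g Complex.I) : ℂ) = (z.im : ℂ) * inner ℂ x (g Complex.I) := by
      rw [← Complex.coe_smul, inner_smul_right]
    rw [e1, e2]
    simp [Complex.add_im, Complex.mul_re, Complex.mul_im, hc, ← hp, ← hq]
    ring
  -- Step C: upgrade to a complex identity
  have h1 : ∀ y : V, (inner ℂ x y : ℂ)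
      = Complex.I * c * A y + Complex.I * (starRingEnd ℂ) c * (starRingEnd ℂ) (B y) := by
    intro y
    have r1 := h0 y
    have r2 := h0 (Complex.I • y)
    rw [inner_smul_right, hA, hB] at r2
    rw [Complex.ext_iff]
    constructor <;>
    · simp [Complex.mul_re, Complex.mul_im, Complex.add_re, Complex.add_im, hc,
        Complex.conj_I] at r1 r2 ⊢
      ring_nf at r1 r2 ⊢
      linarith
  -- Step D: Riesz representation and the contradiction
  have hc0 : c ≠ 0 := by
    intro h
    have h2 := h1 x
    rw [h] at h2
    simp at h2
    exact hx0 h2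
  let Ac : V →L[ℂ] ℂ :=
    { toLinearMap :=
        { toFun := ⇑A, map_add' := fun u v => map_add A u v,
          map_smul' := fun r v => by simpa using hA r v },
      cont := A.continuous }
  let Bc : V →L[ℂ] ℂ :=
    { toLinearMap :=
        { toFun := fun y => (starRingEnd ℂ) (B y),
          map_add' := fun u v => by simp,
          map_smul' := fun r v => by simp [hB] },
      cont := continuous_star.comp B.continuous }
  have hAc : ∀ y, Ac y = A y := fun _ => rfl
  have hBc : ∀ y, Bc y = (starRingEnd ℂ) (B y) := fun _ => rfl
  set a : V := (InnerProductSpace.toDual ℂ V).symm Ac with hadef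
  set b : V := (InnerProductSpace.toDual ℂ V).symm Bc with hbdef
  have ha : ∀ y, (inner ℂ a y : ℂ) = A y := fun y => InnerProductSpace.toDual_symm_apply
  have hb : ∀ y, (inner ℂ b y : ℂ) = (starRingEnd ℂ) (B y) := fun y =>
    InnerProductSpace.toDual_symm_apply
  have hxa : A x = -(Complex.I * (starRingEnd ℂ) c * inner ℂ a a)
      - Complex.I * c * inner ℂ a b := by
    have h2 : (inner ℂ a x : ℂ) = (starRingEnd ℂ) (inner ℂ x a : ℂ) := (inner_conj_symm a x).symm
    have h3 := h1 a
    rw [← ha a, ← hb a] at h3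
    rw [← ha x, h2, h3]
    simp [inner_conj_symm]
    ring
  have hxb : B x = Complex.I * c * inner ℂ a b + Complex.I * (starRingEnd ℂ) c * inner ℂ b b := by
    have h2 : B x = (inner ℂ x b : ℂ) := by
      calc B x = (starRingEnd ℂ) ((starRingEnd ℂ) (B x)) := by simp
        _ = (starRingEnd ℂ) (inner ℂ b x) := by rw [hb x]
        _ = inner ℂ x b := inner_conj_symm x b
    rw [h2, h1 b, ← ha b, ← hb b]
  have key : Complex.I * (starRingEnd ℂ) c * (inner ℂ b b - inner ℂ a a) = 0 := by
    rw [← hx, hxa, hxb]; ring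
  have hab : (inner ℂ a a : ℂ) = inner ℂ b b := by
    have h2 : Complex.I * (starRingEnd ℂ) c ≠ 0 := by
      simp [Complex.I_ne_zero, hc0]
    have := (mul_eq_zero.mp key).resolve_left h2
    linear_combination -this
  have hnab : ‖a‖ = ‖b‖ := by
    have h2 := hab
    rw [inner_self_eq_norm_sq_to_K, inner_self_eq_norm_sq_to_K] at h2
    have h3 : ‖a‖^2 = ‖b‖^2 := by exact_mod_cast h2
    nlinarith [norm_nonneg a, norm_nonneg b]
  have hnA : ‖a‖ = ‖A‖ := by
    rw [hadef, LinearIsometryEquiv.norm_map]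
    refine le_antisymm (Ac.opNorm_le_bound (norm_nonneg A) fun y => ?_)
      (A.opNorm_le_bound (norm_nonneg Ac) fun y => ?_)
    · exact A.le_opNorm y
    · exact Ac.le_opNorm y
  have hnB : ‖b‖ = ‖B‖ := by
    rw [hbdef, LinearIsometryEquiv.norm_map]
    refine le_antisymm (Bc.opNorm_le_bound (norm_nonneg B) fun y => ?_)
      (B.opNorm_le_bound (norm_nonneg Bc) fun y => ?_)
    · rw [hBc y, RCLike.norm_conj]; exact B.le_opNorm y
    · have h2 := Bc.le_opNorm y
      rw [hBc y, RCLike.norm_conj] at h2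
      exact h2
  rw [hnA, hnB] at hnab
  linarith
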